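/- Theorem 3 (inclusion form). Under the calibration-data setup, assume that each f(x_j) is a probability vector on Y, that f(x_j)_{y_j} ≥ 1/|S_j| for every j ∈ I, and that 1 ≤ ⌈(1+|I|)(1−ε)⌉ ≤ |I|. Then q(E_mean, ε) ≥ q(E_1, ε), and consequently for every point x the inclusion T(x, f, E_1, ε) ⊆ T(x, f, E_mean, ε) holds. -/

import Mathlib

/-- The m-th smallest element (1-indexed, with multiplicity) of a finite multiset of reals. -/
noncomputable def nthSmallest (E : Multiset ℝ) (m : ℕ) : ℝ :=
  (E.sort (· ≤ ·)).getD (m - 1) 0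

/-- The critical score q(E, ε): the ⌈(1+|E|)(1−ε)⌉-th smallest element of E. -/
noncomputable def critScore (E : Multiset ℝ) (ε : ℝ) : ℝ :=
  nthSmallest E (⌈(1 + (Multiset.card E : ℝ)) * (1 - ε)⌉.toNat)

/-- E_1 := {1 − f(x_j)_{y_j} : j ∈ I} (with multiplicity). -/
noncomputable def calE1 {X Y I : Type*} [Fintype I] (f : X → Y → ℝ) (xc : I → X)
    (yt : I → Y) : Multiset ℝ :=
  Finset.univ.val.map fun j => 1 - f (xc j) (yt j)

/-- E_mean := {1 − (Σ_{y∈S_j} f(x_j)_y)/|S_j| : j ∈ I} (with multiplicity). -/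
noncomputable def calEmean {X Y I : Type*} [Fintype I] (f : X → Y → ℝ) (xc : I → X)
    (S : I → Finset Y) : Multiset ℝ :=
  Finset.univ.val.map fun j => 1 - (∑ y ∈ S j, f (xc j) y) / ((S j).card : ℝ)


lemma sorted_countP_le_ge {l : List ℝ} (hl : l.Pairwise (· ≤ ·)) {i : ℕ} (hi : i < l.length) :
    i + 1 ≤ l.countP (fun x => decide (x ≤ l[i])) := by
  have h1 : (l.take (i+1)).countP (fun x => decide (x ≤ l[i])) = i + 1 := by
    rw [List.countP_eq_length.mpr, List.length_take, min_eq_left (by omega)]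
    intro x hx
    rw [List.mem_take_iff_getElem] at hx
    obtain ⟨j, hj, rfl⟩ := hx
    simp only [decide_eq_true_eq]
    rcases lt_or_eq_of_le (Nat.lt_succ_iff.mp (by omega : j < i + 1)) with h | h
    · simpa using List.pairwise_iff_get.mp hl ⟨j, by omega⟩ ⟨i, hi⟩ (Fin.mk_lt_mk.mpr h)
    · subst h; simp
  calc i + 1 = (l.take (i+1)).countP _ := h1.symm
    _ ≤ l.countP _ := (List.take_sublist _ _).countP_le

lemma sorted_countP_lt {l : List ℝ} (hl : l.Pairwise (· ≤ ·)) {i : ℕ} (hi : i < l.length)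
    {t : ℝ} (ht : t < l[i]) :
    l.countP (fun x => decide (x ≤ t)) ≤ i := by
  have h2 : (l.drop i).countP (fun x => decide (x ≤ t)) = 0 := by
    rw [List.countP_eq_zero]
    intro x hx
    rw [List.mem_iff_getElem] at hx
    obtain ⟨j, hj, rfl⟩ := hx
    have hj' : i + j < l.length := by rw [List.length_drop] at hj; omega
    rw [List.getElem_drop]
    simp only [decide_eq_true_eq, not_le]
    refine lt_of_lt_of_le ht ?_
    rcases Nat.eq_zero_or_pos j with h | h
    · subst h; simp
    · simpa using List.pairwise_iff_get.mp hl ⟨i, hi⟩ ⟨i + j, hj'⟩ (Fin.mk_lt_mk.mpr (by omega))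
  have h3 : (l.take i).countP (fun x => decide (x ≤ t)) ≤ i := by
    calc _ ≤ (l.take i).length := List.countP_le_length
      _ ≤ i := by simp
  have h4 := List.countP_append (l₁ := l.take i) (l₂ := l.drop i) (p := fun x => decide (x ≤ t))
  rw [List.take_append_drop] at h4
  omega

lemma rel_countP_le {s t : Multiset ℝ} (h : Multiset.Rel (· ≤ ·) s t) (x : ℝ) :
    t.countP (fun a => a ≤ x) ≤ s.countP (fun a => a ≤ x) := by
  induction h with
  | zero => simp
  | @cons a b as bs hab _ ih =>
    rw [Multiset.countP_cons, Multiset.countP_cons]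
    by_cases hb : b ≤ x
    · simp only [hb, le_trans hab hb, if_true]; omega
    · simp only [hb, if_false]; split <;> omega

lemma nthSmallest_mono {s t : Multiset ℝ} (h : Multiset.Rel (· ≤ ·) s t)
    {m : ℕ} (hm1 : 1 ≤ m) (hm2 : m ≤ Multiset.card s) :
    nthSmallest s m ≤ nthSmallest t m := by
  have hcard : Multiset.card s = Multiset.card t := Multiset.card_eq_card_of_rel h
  set la := s.sort (· ≤ ·) with hla
  set lb := t.sort (· ≤ ·) with hlb
  have hlena : la.length = Multiset.card s := Multiset.length_sort _
  have hlenb : lb.length = Multiset.card t := Multiset.length_sort _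
  have hia : m - 1 < la.length := by omega
  have hib : m - 1 < lb.length := by omega
  unfold nthSmallest
  rw [List.getD_eq_getElem _ _ hia, List.getD_eq_getElem _ _ hib]
  by_contra hcon
  push_neg at hcon
  have h1 := sorted_countP_lt (Multiset.pairwise_sort s _) hia hcon
  have h2 := sorted_countP_le_ge (Multiset.pairwise_sort t _) hib
  have hrel : Multiset.Rel (· ≤ ·) (↑la : Multiset ℝ) (↑lb : Multiset ℝ) := by
    rw [hla, hlb, Multiset.sort_eq, Multiset.sort_eq]; exact h
  have h3 := rel_countP_le hrel (lb[m-1])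
  rw [Multiset.coe_countP, Multiset.coe_countP] at h3
  simp only [← hla, ← hlb] at h1 h2 h3
  omega

/-- Theorem 3 (inclusion form). -/
theorem thm3_inclusion {X Y I : Type*} [Fintype Y] [Fintype I]
    (f : X → Y → ℝ) (xc : I → X) (S : I → Finset Y) (yt : I → Y)
    (hS : ∀ j, (S j).Nonempty) (hy : ∀ j, yt j ∈ S j)
    (hprob : ∀ j, (∀ y, 0 ≤ f (xc j) y) ∧ (∑ y, f (xc j) y) = 1)
    (hbig : ∀ j, f (xc j) (yt j) ≥ 1 / ((S j).card : ℝ))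
    (ε : ℝ) (hε0 : 0 < ε) (hε1 : ε ≤ 1)
    (hk1 : 1 ≤ ⌈(1 + (Fintype.card I : ℝ)) * (1 - ε)⌉)
    (hk2 : ⌈(1 + (Fintype.card I : ℝ)) * (1 - ε)⌉ ≤ (Fintype.card I : ℤ)) :
    critScore (calEmean f xc S) ε ≥ critScore (calE1 f xc yt) ε ∧
      ∀ x : X, {y : Y | f x y ≥ 1 - critScore (calE1 f xc yt) ε} ⊆
        {y : Y | f x y ≥ 1 - critScore (calEmean f xc S) ε} := by
  have hcard1 : Multiset.card (calE1 f xc yt) = Fintype.card I := by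
    rw [calE1, Multiset.card_map]; rfl
  have hcard2 : Multiset.card (calEmean f xc S) = Fintype.card I := by
    rw [calEmean, Multiset.card_map]; rfl
  have hrel : Multiset.Rel (· ≤ ·) (calE1 f xc yt) (calEmean f xc S) := by
    rw [calE1, calEmean, Multiset.rel_map]
    apply Multiset.rel_refl_of_refl_on
    intro j _
    have hSpos : (0:ℝ) < ((S j).card : ℝ) := by
      exact_mod_cast Finset.card_pos.mpr (hS j)
    have hsum : (∑ y ∈ S j, f (xc j) y) ≤ 1 := by
      rw [← (hprob j).2]
      exact Finset.sum_le_sum_of_subset_of_nonneg (Finset.subset_univ _)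
        (fun y _ _ => (hprob j).1 y)
    have hmean : (∑ y ∈ S j, f (xc j) y) / ((S j).card : ℝ) ≤ f (xc j) (yt j) := by
      refine le_trans ?_ (hbig j)
      exact div_le_div_of_nonneg_right hsum hSpos.le |>.trans_eq rfl
    linarith
  have hq : critScore (calE1 f xc yt) ε ≤ critScore (calEmean f xc S) ε := by
    rw [critScore, critScore, hcard1, hcard2]
    exact nthSmallest_mono hrel (by omega) (by rw [hcard1]; omega)
  refine ⟨hq, fun x y hy' => ?_⟩
  simp only [Set.mem_setOf_eq, ge_iff_le] at hy' ⊢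
  linarith
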